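/- Let M and M̂ be as in the single-component specialization construction, and write M̂ in block form M̂ = [[U, Ŷ], [Ŵ, Ẑ]] with respect to the splitting B ⊕ (P × C), where Ẑ is the block-diagonal matrix with one copy of Z for each element of P. Then for every λ ∈ ℂ that is not a root of the characteristic polynomial of Z, one has Ŷ (λI − Ẑ)^{−1} Ŵ = Σ_{i=1}^{y} Σ_{j=1}^{w} Y_i (λI − Z)^{−1} W_j = Y (λI − Z)^{−1} W (all matrices viewed as complex matrices). In particular, the isospectral reductions of M̂ and of M onto the base block B coincide: U + Ŷ(λI − Ẑ)^{−1}Ŵ = U + Y(λI − Z)^{−1}W. -/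

import Mathlib

open Matrix

/-- The `(B, P×C)` block `Ŷ` of the specialization, as a complex matrix. -/
def Yhat {l m y w : ℕ} (Y : Fin y → Matrix (Fin l) (Fin m) ℝ) :
    Matrix (Fin l) ((Fin y × Fin w) × Fin m) ℂ :=
  fun a pc => (Y pc.1.1 a pc.2 : ℂ)

/-- The `(P×C, B)` block `Ŵ` of the specialization, as a complex matrix. -/
def What {l m y w : ℕ} (W : Fin w → Matrix (Fin m) (Fin l) ℝ) :
    Matrix ((Fin y × Fin w) × Fin m) (Fin l) ℂ :=
  fun pr b => (W pr.1.2 pr.2 b : ℂ)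

/-- The `(P×C, P×C)` block `Ẑ` of the specialization (block diagonal with copies of `Z`),
as a complex matrix. -/
def Zhat {m : ℕ} (y w : ℕ) (Z : Matrix (Fin m) (Fin m) ℝ) :
    Matrix ((Fin y × Fin w) × Fin m) ((Fin y × Fin w) × Fin m) ℂ :=
  fun pr qc => if pr.1 = qc.1 then (Z pr.2 qc.2 : ℂ) else 0

/-- For `λ` not a root of the characteristic polynomial of `Z`,
`Ŷ (λI − Ẑ)⁻¹ Ŵ = Σᵢ Σⱼ Yᵢ (λI − Z)⁻¹ Wⱼ = Y (λI − Z)⁻¹ W`, and in particular the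
isospectral reductions of `M̂` and `M` onto the base block `B` coincide. -/
theorem specialization_block_reduction_eq
    {l m y w : ℕ} (hl : 1 ≤ l) (hm : 1 ≤ m) (hy : 1 ≤ y) (hw : 1 ≤ w)
    (U : Matrix (Fin l) (Fin l) ℝ) (Z : Matrix (Fin m) (Fin m) ℝ)
    (Y : Fin y → Matrix (Fin l) (Fin m) ℝ) (W : Fin w → Matrix (Fin m) (Fin l) ℝ)
    (lam : ℂ)
    (hlam : Polynomial.eval lam (Matrix.charpoly (Z.map Complex.ofReal)) ≠ 0) :
    Yhat (w := w) Y * (lam • (1 : Matrix ((Fin y × Fin w) × Fin m) ((Fin y × Fin w) × Fin m) ℂ)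
        - Zhat y w Z)⁻¹ * What (y := y) W
      = ∑ i : Fin y, ∑ j : Fin w,
          (Y i).map Complex.ofReal
            * (lam • (1 : Matrix (Fin m) (Fin m) ℂ) - Z.map Complex.ofReal)⁻¹
            * (W j).map Complex.ofReal
    ∧ (∑ i : Fin y, ∑ j : Fin w,
          (Y i).map Complex.ofReal
            * (lam • (1 : Matrix (Fin m) (Fin m) ℂ) - Z.map Complex.ofReal)⁻¹
            * (W j).map Complex.ofReal)
      = ((∑ i, Y i).map Complex.ofReal)
          * (lam • (1 : Matrix (Fin m) (Fin m) ℂ) - Z.map Complex.ofReal)⁻¹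
          * ((∑ j, W j).map Complex.ofReal)
    ∧ U.map Complex.ofReal
        + Yhat (w := w) Y * (lam • (1 : Matrix ((Fin y × Fin w) × Fin m) ((Fin y × Fin w) × Fin m) ℂ)
            - Zhat y w Z)⁻¹ * What (y := y) W
      = U.map Complex.ofReal
        + ((∑ i, Y i).map Complex.ofReal)
            * (lam • (1 : Matrix (Fin m) (Fin m) ℂ) - Z.map Complex.ofReal)⁻¹
            * ((∑ j, W j).map Complex.ofReal) := by
  set A : Matrix (Fin m) (Fin m) ℂ := lam • (1 : Matrix (Fin m) (Fin m) ℂ) - Z.map Complex.ofReal with hA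
  have hdet : A.det ≠ 0 := by
    intro h
    apply hlam
    rw [charpoly, eval_det, matPolyEquiv_charmatrix]
    rw [← h, hA]
    congr 1
    simp [smul_eq_diagonal_mul, Matrix.scalar]
  have hunit : IsUnit A.det := isUnit_iff_ne_zero.mpr hdet
  have hAinv : A * A⁻¹ = 1 := mul_nonsing_inv _ hunit
  set Binv : Matrix ((Fin y × Fin w) × Fin m) ((Fin y × Fin w) × Fin m) ℂ :=
    Matrix.of fun pr qc => if pr.1 = qc.1 then A⁻¹ pr.2 qc.2 else 0 with hB
  have hbig : (lam • (1 : Matrix ((Fin y × Fin w) × Fin m) ((Fin y × Fin w) × Fin m) ℂ)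
        - Zhat y w Z)
      = Matrix.of fun pr qc => if pr.1 = qc.1 then A pr.2 qc.2 else 0 := by
    funext pr qc
    by_cases h : pr.1 = qc.1
    · by_cases h2 : pr.2 = qc.2 <;>
        simp [Zhat, h, h2, hA, Matrix.one_apply, Prod.ext_iff, Matrix.sub_apply]
    · simp [Zhat, h, Matrix.one_apply, Prod.ext_iff, Matrix.sub_apply]
      intro h1 h2; exact absurd (Prod.ext h1 h2) h
  have hinv : (lam • (1 : Matrix ((Fin y × Fin w) × Fin m) ((Fin y × Fin w) × Fin m) ℂ)
      - Zhat y w Z)⁻¹ = Binv := by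
    apply inv_eq_right_inv
    rw [hbig]
    ext pr qc
    rw [mul_apply]
    rw [Fintype.sum_prod_type]
    rw [Finset.sum_eq_single pr.1]
    · by_cases h : pr.1 = qc.1
      · simp only [hB, Matrix.of_apply, if_pos rfl, h, if_pos rfl]
        have := congrFun (congrFun hAinv pr.2) qc.2
        rw [mul_apply] at this
        simpa [Matrix.one_apply, Prod.ext_iff, h] using this
      · have h' : ¬(pr.1.1 = qc.1.1 ∧ pr.1.2 = qc.1.2) := by
          rw [← Prod.ext_iff]; exact h
        simp [hB, h, h', Matrix.one_apply, Prod.ext_iff]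
    · intro p _ hp
      simp [hB, Ne.symm hp]
    · simp
  have main1 : Yhat (w := w) Y * Binv * What (y := y) W
      = ∑ i : Fin y, ∑ j : Fin w,
          (Y i).map Complex.ofReal * A⁻¹ * (W j).map Complex.ofReal := by
    ext a b
    simp only [mul_apply, Matrix.sum_apply, Yhat, What, hB, Matrix.of_apply, Fintype.sum_prod_type,
      map_apply, Finset.sum_mul, Finset.mul_sum, ite_mul, zero_mul, mul_ite, mul_zero,
      Prod.mk.injEq]
    refine Finset.sum_congr rfl fun i _ => Finset.sum_congr rfl fun j _ =>
      Finset.sum_congr rfl fun d _ => ?_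
    rw [Finset.sum_eq_single i]
    · rw [Finset.sum_eq_single j]
      · simp
      · intro x4 _ hne; simp [hne]
      · simp
    · intro x3 _ hne; simp [hne]
    · simp
  have main2 : (∑ i : Fin y, ∑ j : Fin w,
          (Y i).map Complex.ofReal * A⁻¹ * (W j).map Complex.ofReal)
      = ((∑ i, Y i).map Complex.ofReal) * A⁻¹ * ((∑ j, W j).map Complex.ofReal) := by
    have hYm : (∑ i, Y i).map Complex.ofReal = ∑ i, (Y i).map Complex.ofReal := by
      ext a c; simp [Matrix.sum_apply]
    have hWm : (∑ j, W j).map Complex.ofReal = ∑ j, (W j).map Complex.ofReal := by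
      ext c b; simp [Matrix.sum_apply]
    rw [hYm, hWm, Matrix.mul_sum, Finset.sum_comm]
    refine Finset.sum_congr rfl fun j _ => ?_
    rw [← Matrix.sum_mul, ← Matrix.sum_mul]
  refine ⟨by rw [hinv]; exact main1, main2, ?_⟩
  rw [hinv, main1, main2]
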